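/- Let E be a finite-dimensional real inner product space with dim E ≥ 1 and let h : E → ℝ be convex, differentiable, positively homogeneous of degree 2 (h(t • x) = t² · h(x) for all t ≥ 0, x ∈ E), with 1-Lipschitz gradient ∇h, and suppose there is c > 0 such that h(y) ≥ c for every y with ‖y‖ = 1. Then for every x ∈ E, ‖x − ∇h(x)‖ ≤ (1/√(1 + 2c)) · ‖x‖; in particular the unit-step gradient descent map x ↦ x − ∇h(x) contracts linearly toward the origin. -/

import Mathlib

open Set

/-- Chain rule: derivative of `t ↦ h (x + t • v)` in terms of the gradient. -/
lemma hasDerivAt_line_comp {E : Type*} [NormedAddCommGroup E] [InnerProductSpace ℝ E]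
    [CompleteSpace E] (h : E → ℝ) (hdiff : Differentiable ℝ h) (x v : E) (t : ℝ) :
    HasDerivAt (fun s : ℝ => h (x + s • v))
      (inner ℝ (gradient h (x + t • v)) v : ℝ) t := by
  have hline : HasDerivAt (fun s : ℝ => x + s • v) v t := by
    simpa using ((hasDerivAt_id t).smul_const v).const_add x
  have hf := (hdiff (x + t • v)).hasGradientAt.hasFDerivAt
  have := hf.comp_hasDerivAt t hline
  exact this.congr_deriv (by simp [InnerProductSpace.toDual_apply_apply])

theorem gradient_step_linear_contraction
    {E : Type*} [NormedAddCommGroup E] [InnerProductSpace ℝ E]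
    [FiniteDimensional ℝ E] (hdim : 1 ≤ Module.finrank ℝ E)
    (h : E → ℝ) (hconv : ConvexOn ℝ Set.univ h) (hdiff : Differentiable ℝ h)
    (hhom : ∀ t : ℝ, 0 ≤ t → ∀ x : E, h (t • x) = t ^ 2 * h x)
    (hlip : ∀ x y : E, ‖gradient h x - gradient h y‖ ≤ ‖x - y‖)
    (c : ℝ) (hc : 0 < c) (hsphere : ∀ y : E, ‖y‖ = 1 → c ≤ h y) :
    ∀ x : E, ‖x - gradient h x‖ ≤ (1 / Real.sqrt (1 + 2 * c)) * ‖x‖ := by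
  set g := gradient h with hg
  -- h 0 = 0
  have h0 : h 0 = 0 := by
    have := hhom 0 le_rfl 0
    simpa using this
  -- lower bound h z ≥ c * ‖z‖^2
  have hlb : ∀ z : E, c * ‖z‖ ^ 2 ≤ h z := by
    intro z
    rcases eq_or_ne z 0 with rfl | hz
    · simp [h0]
    · have hnz : (0:ℝ) < ‖z‖ := norm_pos_iff.mpr hz
      have hu : ‖(‖z‖⁻¹ • z)‖ = 1 := by
        rw [norm_smul]; simp [abs_of_pos (inv_pos.mpr hnz), inv_mul_cancel₀ hnz.ne']
      have h1 : c ≤ h (‖z‖⁻¹ • z) := hsphere _ hu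
      have h2 : h z = ‖z‖ ^ 2 * h (‖z‖⁻¹ • z) := by
        have := hhom ‖z‖ hnz.le (‖z‖⁻¹ • z)
        rw [smul_smul, mul_inv_cancel₀ hnz.ne', one_smul] at this
        rw [this]
      rw [h2, mul_comm]
      exact mul_le_mul_of_nonneg_left h1 (by positivity)
  have hnn : ∀ z : E, 0 ≤ h z := fun z => le_trans (by positivity) (hlb z)
  intro x
  -- Euler relation: ⟪g x, x⟫ = 2 * h x
  have heuler : (inner ℝ (g x) x : ℝ) = 2 * h x := by
    have hφ : HasDerivAt (fun s : ℝ => h (0 + s • x)) (inner ℝ (g (0 + (1:ℝ) • x)) x : ℝ) 1 :=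
      hasDerivAt_line_comp h hdiff 0 x 1
    have heq : (fun s : ℝ => h (0 + s • x)) =ᶠ[nhds (1:ℝ)] fun s : ℝ => s ^ 2 * h x := by
      filter_upwards [eventually_gt_nhds (show (0:ℝ) < 1 by norm_num)] with s hs
      simp [hhom s hs.le x]
    have hφ' : HasDerivAt (fun s : ℝ => s ^ 2 * h x) (inner ℝ (g (0 + (1:ℝ) • x)) x : ℝ) 1 :=
      hφ.congr_of_eventuallyEq heq.symm
    have hφ'' : HasDerivAt (fun s : ℝ => s ^ 2 * h x) (2 * 1 * h x) 1 := by
      simpa using ((hasDerivAt_pow 2 (1:ℝ)).mul_const (h x))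
    have := hφ'.unique hφ''
    simpa using this
  -- Descent lemma instance: ‖g x‖^2 ≤ 2 * h x
  have hdesc : ‖g x‖ ^ 2 ≤ 2 * h x := by
    set v := -(g x) with hv
    -- ψ s = h (x + s v) - s ⟪g x, v⟫ - s^2 ‖v‖^2 / 2 is antitone on [0,1]
    set ψ : ℝ → ℝ := fun s => h (x + s • v) - s * inner ℝ (g x) v - s ^ 2 * ‖v‖ ^ 2 / 2 with hψ
    have hψd : ∀ s : ℝ, HasDerivAt ψ
        ((inner ℝ (g (x + s • v)) v : ℝ) - inner ℝ (g x) v - s * ‖v‖ ^ 2) s := by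
      intro s
      have h1 := hasDerivAt_line_comp h hdiff x v s
      have h2 : HasDerivAt (fun s : ℝ => s * (inner ℝ (g x) v : ℝ)) (inner ℝ (g x) v : ℝ) s := by
        simpa using (hasDerivAt_id s).mul_const (inner ℝ (g x) v : ℝ)
      have h3 : HasDerivAt (fun s : ℝ => s ^ 2 * ‖v‖ ^ 2 / 2) (s * ‖v‖ ^ 2) s := by
        have := ((hasDerivAt_pow 2 s).mul_const (‖v‖ ^ 2)).div_const 2
        exact this.congr_deriv (by norm_num; ring)
      exact (h1.sub h2).sub h3
    have hanti : AntitoneOn ψ (Icc (0:ℝ) 1) := by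
      apply antitoneOn_of_deriv_nonpos (convex_Icc 0 1)
      · exact fun s _ => ((hψd s).continuousAt).continuousWithinAt
      · exact fun s _ => ((hψd s).differentiableAt).differentiableWithinAt
      · intro s hs
        rw [interior_Icc] at hs
        rw [(hψd s).deriv]
        have hb : (inner ℝ (g (x + s • v)) v : ℝ) - inner ℝ (g x) v ≤ s * ‖v‖ ^ 2 := by
          have h4 : (inner ℝ (g (x + s • v)) v : ℝ) - inner ℝ (g x) v
              = inner ℝ (g (x + s • v) - g x) v := by rw [inner_sub_left]
          rw [h4]
          calc (inner ℝ (g (x + s • v) - g x) v : ℝ)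
              ≤ ‖g (x + s • v) - g x‖ * ‖v‖ := real_inner_le_norm _ _
            _ ≤ ‖x + s • v - x‖ * ‖v‖ :=
                mul_le_mul_of_nonneg_right (hlip _ _) (norm_nonneg _)
            _ = s * ‖v‖ ^ 2 := by
                rw [add_sub_cancel_left, norm_smul, Real.norm_eq_abs,
                  abs_of_pos hs.1]
                ring
        linarith
    have key := hanti (left_mem_Icc.mpr zero_le_one) (right_mem_Icc.mpr zero_le_one) zero_le_one
    have hψ0 : ψ 0 = h x := by simp [hψ]
    have hψ1 : ψ 1 = h (x + v) - inner ℝ (g x) v - ‖v‖ ^ 2 / 2 := by simp [hψ]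
    rw [hψ0, hψ1] at key
    have hiv : (inner ℝ (g x) v : ℝ) = -‖g x‖ ^ 2 := by
      rw [hv, inner_neg_right, real_inner_self_eq_norm_sq]
    have hnv : ‖v‖ = ‖g x‖ := by rw [hv, norm_neg]
    rw [hiv, hnv] at key
    have := hnn (x + v)
    linarith
  -- assemble
  have hid : ‖x - g x‖ ^ 2 = ‖x‖ ^ 2 - 2 * inner ℝ (g x) x + ‖g x‖ ^ 2 := by
    rw [norm_sub_sq_real, real_inner_comm]
  have hkey : ‖x - g x‖ ^ 2 ≤ (1 - 2 * c) * ‖x‖ ^ 2 := by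
    have := hlb x
    rw [hid, heuler]
    nlinarith
  have hpos : (0:ℝ) < 1 + 2 * c := by linarith
  have hfrac : (1 - 2 * c) * ‖x‖ ^ 2 ≤ 1 / (1 + 2 * c) * ‖x‖ ^ 2 := by
    apply mul_le_mul_of_nonneg_right _ (by positivity)
    rw [le_div_iff₀ hpos]
    nlinarith
  have hrhs : ((1 / Real.sqrt (1 + 2 * c)) * ‖x‖) ^ 2 = 1 / (1 + 2 * c) * ‖x‖ ^ 2 := by
    rw [mul_pow, div_pow, one_pow, Real.sq_sqrt hpos.le]
  have hsq : ‖x - g x‖ ^ 2 ≤ ((1 / Real.sqrt (1 + 2 * c)) * ‖x‖) ^ 2 := by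
    rw [hrhs]; exact hkey.trans hfrac
  have hrnn : 0 ≤ (1 / Real.sqrt (1 + 2 * c)) * ‖x‖ := by positivity
  calc ‖x - g x‖ = Real.sqrt (‖x - g x‖ ^ 2) := (Real.sqrt_sq (norm_nonneg _)).symm
    _ ≤ Real.sqrt (((1 / Real.sqrt (1 + 2 * c)) * ‖x‖) ^ 2) := Real.sqrt_le_sqrt hsq
    _ = (1 / Real.sqrt (1 + 2 * c)) * ‖x‖ := Real.sqrt_sq hrnn
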